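/- Let ψ(t) = g(t)·h(t∧·) type Schauder element for the 1D case and define the dual distribution δ_{n,k} = g⁻¹·(M_{n,k} δ_{m_{n,k}} − L_{n,k} δ_{l_{n,k}} − R_{n,k} δ_{r_{n,k}}). Then the pairing ⟨δ_{p,q}, ψ_{n,k}⟩ = δ^{n,k}_{p,q} (Kronecker), i.e. the family (δ_{n,k}) is biorthogonal to (ψ_{n,k}). -/

import Mathlib

noncomputable section

/-- Left endpoint `l_{n,k} = k·2^{1−n}` of the dyadic support. -/
def lpt (n k : ℕ) : ℝ := (k : ℝ) * (2:ℝ) ^ ((1:ℤ) - (n:ℤ))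

/-- Midpoint `m_{n,k} = (2k+1)·2^{−n}` of the dyadic support. -/
def mpt (n k : ℕ) : ℝ := (2 * (k : ℝ) + 1) * (2:ℝ) ^ (-(n:ℤ))

/-- Right endpoint `r_{n,k} = (k+1)·2^{1−n}` of the dyadic support. -/
def rpt (n k : ℕ) : ℝ := ((k : ℝ) + 1) * (2:ℝ) ^ ((1:ℤ) - (n:ℤ))

/-- The bridge standard deviation `σ_{n,k}`, square root of
`Σ_{n,k} = g(m)²·(h(r)−h(m))(h(m)−h(l))/(h(r)−h(l))`. -/
def sigmank (g h : ℝ → ℝ) (n k : ℕ) : ℝ :=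
  Real.sqrt ((g (mpt n k)) ^ 2 *
    ((h (rpt n k) - h (mpt n k)) * (h (mpt n k) - h (lpt n k)) /
      (h (rpt n k) - h (lpt n k))))

/-- The constant `L_{n,k} = (h(m)−h(l))⁻¹ g(m)⁻¹ σ_{n,k}`. -/
def Lnk (g h : ℝ → ℝ) (n k : ℕ) : ℝ :=
  sigmank g h n k / (g (mpt n k) * (h (mpt n k) - h (lpt n k)))

/-- The constant `R_{n,k} = (h(r)−h(m))⁻¹ g(m)⁻¹ σ_{n,k}`. -/
def Rnk (g h : ℝ → ℝ) (n k : ℕ) : ℝ :=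
  sigmank g h n k / (g (mpt n k) * (h (rpt n k) - h (mpt n k)))

/-- The constant `M_{n,k} = L_{n,k} + R_{n,k}`. -/
def Mnk (g h : ℝ → ℝ) (n k : ℕ) : ℝ := Lnk g h n k + Rnk g h n k

/-- The one-dimensional Schauder element `ψ_{n,k}`. -/
def psink (g h : ℝ → ℝ) (n k : ℕ) (t : ℝ) : ℝ :=
  if t < lpt n k then 0
  else if t ≤ mpt n k then g t * (h t - h (lpt n k)) * Lnk g h n k
  else if t ≤ rpt n k then g t * (h (rpt n k) - h t) * Rnk g h n k
  else 0

/-- The pairing of the dual distribution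
`δ_{p,q} = g⁻¹·(M_{p,q} δ_{m_{p,q}} − L_{p,q} δ_{l_{p,q}} − R_{p,q} δ_{r_{p,q}})`
against a continuous function `x`. -/
def pairing (g h : ℝ → ℝ) (p q : ℕ) (x : ℝ → ℝ) : ℝ :=
  Mnk g h p q * x (mpt p q) / g (mpt p q)
    - Lnk g h p q * x (lpt p q) / g (lpt p q)
    - Rnk g h p q * x (rpt p q) / g (rpt p q)

/-- Auxiliary: the dyadic spacing `2^{-n}`. -/
def Ee (n : ℕ) : ℝ := (2:ℝ) ^ (-(n:ℤ))

lemma Ee_pos (n : ℕ) : 0 < Ee n := zpow_pos (by norm_num) _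

lemma two_zpow_split (n : ℕ) : (2:ℝ) ^ ((1:ℤ) - (n:ℤ)) = 2 * Ee n := by
  rw [show ((1:ℤ) - (n:ℤ)) = 1 + (-(n:ℤ)) by ring, zpow_add₀ (by norm_num : (2:ℝ) ≠ 0),
    zpow_one, Ee]

lemma lpt_eq (n k : ℕ) : lpt n k = (2*(k:ℝ)) * Ee n := by rw [lpt, two_zpow_split]; ring

lemma mpt_eq (n k : ℕ) : mpt n k = (2*(k:ℝ)+1) * Ee n := rfl

lemma rpt_eq (n k : ℕ) : rpt n k = (2*(k:ℝ)+2) * Ee n := by rw [rpt, two_zpow_split]; ring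

lemma lpt_lt_mpt (n k : ℕ) : lpt n k < mpt n k := by
  rw [lpt_eq, mpt_eq]; have := Ee_pos n; nlinarith

lemma mpt_lt_rpt (n k : ℕ) : mpt n k < rpt n k := by
  rw [mpt_eq, rpt_eq]; have := Ee_pos n; nlinarith

lemma psi_zero_left {g h : ℝ → ℝ} {n k : ℕ} {t : ℝ} (ht : t ≤ lpt n k) :
    psink g h n k t = 0 := by
  rcases lt_or_eq_of_le ht with hlt | heq
  · rw [psink, if_pos hlt]
  · rw [psink, heq, if_neg (lt_irrefl _), if_pos (lpt_lt_mpt n k).le, sub_self,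
      mul_zero, zero_mul]

lemma psi_zero_right {g h : ℝ → ℝ} {n k : ℕ} {t : ℝ} (ht : rpt n k ≤ t) :
    psink g h n k t = 0 := by
  have h1 : ¬ t < lpt n k := not_lt.2 (((lpt_lt_mpt n k).trans (mpt_lt_rpt n k)).le.trans ht)
  have h2 : ¬ t ≤ mpt n k := not_le.2 (lt_of_lt_of_le (mpt_lt_rpt n k) ht)
  rcases lt_or_eq_of_le ht with hlt | heq
  · rw [psink, if_neg h1, if_neg h2, if_neg (not_le.2 hlt)]
  · subst heq
    rw [psink, if_neg h1, if_neg h2, if_pos le_rfl, sub_self, mul_zero, zero_mul]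

lemma psi_mid {g h : ℝ → ℝ} {n k : ℕ} {t : ℝ} (h1 : lpt n k ≤ t) (h2 : t ≤ mpt n k) :
    psink g h n k t = g t * (h t - h (lpt n k)) * Lnk g h n k := by
  rw [psink, if_neg (not_lt.2 h1), if_pos h2]

lemma key_eq (g h : ℝ → ℝ) (hgpos : ∀ t, 0 < g t) (hmono : StrictMono h) (n k : ℕ) :
    Lnk g h n k * (h (mpt n k) - h (lpt n k)) = Rnk g h n k * (h (rpt n k) - h (mpt n k)) := by
  have hG : g (mpt n k) ≠ 0 := (hgpos _).ne'
  have hA : h (mpt n k) - h (lpt n k) ≠ 0 := sub_ne_zero.2 (hmono (lpt_lt_mpt n k)).ne'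
  have hB : h (rpt n k) - h (mpt n k) ≠ 0 := sub_ne_zero.2 (hmono (mpt_lt_rpt n k)).ne'
  rw [Lnk, Rnk]
  field_simp

lemma psi_mid2 {g h : ℝ → ℝ} (hgpos : ∀ t, 0 < g t) (hmono : StrictMono h) {n k : ℕ}
    {t : ℝ} (h1 : mpt n k ≤ t) (h2 : t ≤ rpt n k) :
    psink g h n k t = g t * (h (rpt n k) - h t) * Rnk g h n k := by
  have hl : ¬ t < lpt n k := not_lt.2 ((lpt_lt_mpt n k).le.trans h1)
  by_cases hm : t ≤ mpt n k
  · have heq : t = mpt n k := le_antisymm hm h1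
    rw [psink, if_neg hl, if_pos hm, heq]
    linear_combination (g (mpt n k)) * key_eq g h hgpos hmono n k
  · rw [psink, if_neg hl, if_neg hm, if_pos h2]

lemma pairing_affine (g h : ℝ → ℝ) (hgpos : ∀ t, 0 < g t) (hmono : StrictMono h)
    (p q : ℕ) (x : ℝ → ℝ) (a b : ℝ)
    (hx1 : x (lpt p q) = g (lpt p q) * (a * h (lpt p q) + b))
    (hx2 : x (mpt p q) = g (mpt p q) * (a * h (mpt p q) + b))
    (hx3 : x (rpt p q) = g (rpt p q) * (a * h (rpt p q) + b)) :
    pairing g h p q x = 0 := by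
  have hc : ∀ (c y t : ℝ), c * (g t * y) / g t = c * y := by
    intro c y t
    rw [mul_comm (g t) y, ← mul_assoc, mul_div_assoc, div_self (hgpos t).ne', mul_one]
  rw [pairing, hx1, hx2, hx3, Mnk, hc, hc, hc]
  linear_combination a * key_eq g h hgpos hmono p q

lemma pairing_zero (g h : ℝ → ℝ) (hgpos : ∀ t, 0 < g t) (hmono : StrictMono h)
    (p q : ℕ) (x : ℝ → ℝ)
    (hx1 : x (lpt p q) = 0) (hx2 : x (mpt p q) = 0) (hx3 : x (rpt p q) = 0) :
    pairing g h p q x = 0 := by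
  apply pairing_affine g h hgpos hmono p q x 0 0 <;> simp [hx1, hx2, hx3]

lemma diag (g h : ℝ → ℝ) (hgpos : ∀ t, 0 < g t) (hmono : StrictMono h) (n k : ℕ) :
    pairing g h n k (psink g h n k) = 1 := by
  have hl0 : psink g h n k (lpt n k) = 0 := psi_zero_left le_rfl
  have hr0 : psink g h n k (rpt n k) = 0 := psi_zero_right le_rfl
  have hmv : psink g h n k (mpt n k) =
      g (mpt n k) * (h (mpt n k) - h (lpt n k)) * Lnk g h n k :=
    psi_mid (lpt_lt_mpt n k).le le_rfl
  set G := g (mpt n k) with hGdef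
  set A := h (mpt n k) - h (lpt n k) with hAdef
  set B := h (rpt n k) - h (mpt n k) with hBdef
  have hG : 0 < G := hgpos _
  have hA : 0 < A := sub_pos.2 (hmono (lpt_lt_mpt n k))
  have hB : 0 < B := sub_pos.2 (hmono (mpt_lt_rpt n k))
  have hAB : h (rpt n k) - h (lpt n k) = A + B := by rw [hAdef, hBdef]; ring
  have hσsq : (sigmank g h n k) ^ 2 = G ^ 2 * (B * A / (A + B)) := by
    rw [sigmank, ← hGdef, ← hAdef, ← hBdef, hAB, Real.sq_sqrt]
    positivity
  rw [pairing, hl0, hr0, hmv, mul_zero, zero_div, sub_zero, mul_zero, zero_div, sub_zero,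
    Mnk, Lnk, Rnk, ← hGdef, ← hAdef, ← hBdef]
  set σ := sigmank g h n k
  have hABne : A + B ≠ 0 := by positivity
  have hs : σ ^ 2 * (A + B) = G ^ 2 * (B * A) := by
    rw [hσsq]; field_simp
  field_simp
  rw [hAdef, hBdef] at hs
  linear_combination hs

/-- Any point on the coarse grid `c·2^{-p}` with `p < n` is outside the open support. -/
lemma coarse_vanish (g h : ℝ → ℝ) (n k p : ℕ) (hpn : p + 1 ≤ n) (c : ℕ) :
    psink g h n k ((c:ℝ) * Ee p) = 0 := by
  set j : ℕ := c * 2 ^ (n - 1 - p) with hj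
  have hp2 : (0:ℝ) < (2:ℝ) ^ ((1:ℤ) - (n:ℤ)) := zpow_pos (by norm_num) _
  have hexp : ((n - 1 - p : ℕ) : ℤ) + ((1:ℤ) - (n:ℤ)) = -(p:ℤ) := by omega
  have hcast : (c:ℝ) * Ee p = (j:ℝ) * (2:ℝ) ^ ((1:ℤ) - (n:ℤ)) := by
    calc (c:ℝ) * Ee p
        = (c:ℝ) * ((2:ℝ) ^ (((n - 1 - p : ℕ)):ℤ) * (2:ℝ) ^ ((1:ℤ) - (n:ℤ))) := by
          rw [← zpow_add₀ (by norm_num : (2:ℝ) ≠ 0), hexp, Ee]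
      _ = (j:ℝ) * (2:ℝ) ^ ((1:ℤ) - (n:ℤ)) := by
          rw [hj]; push_cast [zpow_natCast]; ring
  rcases le_or_gt j k with hjk | hjk
  · apply psi_zero_left
    rw [hcast, lpt]
    have hc : (j:ℝ) ≤ (k:ℝ) := Nat.cast_le.2 hjk
    nlinarith
  · apply psi_zero_right
    rw [hcast, rpt]
    have hc : (k:ℝ) + 1 ≤ (j:ℝ) := by exact_mod_cast hjk
    nlinarith


/-- Biorthogonality: the dual family `(δ_{p,q})` pairs with the Schauder family
`(ψ_{n,k})` to give the Kronecker delta, `⟨δ_{p,q}, ψ_{n,k}⟩ = δ^{n,k}_{p,q}`. -/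
theorem stmt_17 (g h : ℝ → ℝ) (hg : Continuous g) (hgpos : ∀ t, 0 < g t)
    (hh : Continuous h) (hmono : StrictMono h) :
    ∀ n, 1 ≤ n → ∀ k, k < 2 ^ (n - 1) → ∀ p, 1 ≤ p → ∀ q, q < 2 ^ (p - 1) →
      pairing g h p q (psink g h n k) = if n = p ∧ k = q then 1 else 0 := by
  intro n hn k hk p hp q hq
  by_cases hnp : n = p ∧ k = q
  · obtain ⟨rfl, rfl⟩ := hnp
    rw [if_pos ⟨rfl, rfl⟩]
    exact diag g h hgpos hmono n k
  · rw [if_neg hnp]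
    have hEn := Ee_pos n
    have hEp := Ee_pos p
    have e1 : lpt p q = ((2*q : ℕ):ℝ) * Ee p := by rw [lpt_eq]; push_cast; ring
    have e2 : mpt p q = ((2*q+1 : ℕ):ℝ) * Ee p := by rw [mpt_eq]; push_cast; ring
    have e3 : rpt p q = ((2*q+2 : ℕ):ℝ) * Ee p := by rw [rpt_eq]; push_cast; ring
    rcases lt_trichotomy n p with hlt | heq | hgt
    · -- p > n : the fine support sits inside one affine piece of ψ_{n,k}
      set d : ℕ := 2 ^ (p - n) with hd
      have hdpos : 0 < d := pow_pos (by norm_num) _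
      set j : ℕ := 2 * q / d with hjdef
      have hlow : j * d ≤ 2 * q := Nat.div_mul_le_self _ _
      have h2d : 2 ∣ d := dvd_pow_self 2 (by omega : p - n ≠ 0)
      have hhigh : 2 * q + 2 ≤ (j + 1) * d := by
        have h1 : 2 * q < (j + 1) * d := by
          have ha := Nat.div_add_mod (2 * q) d
          have hb : 2 * q % d < d := Nat.mod_lt _ hdpos
          calc 2 * q = d * (2 * q / d) + 2 * q % d := ha.symm
            _ < d * (2 * q / d) + d := by omega
            _ = (2 * q / d + 1) * d := by ring
        obtain ⟨f, hf⟩ : 2 ∣ (j + 1) * d := h2d.mul_left (j + 1)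
        rw [hf] at h1 ⊢
        omega
      have hdE : Ee n = (d:ℝ) * Ee p := by
        rw [hd, Ee, Ee]
        push_cast
        rw [← zpow_natCast (2:ℝ) (p - n), ← zpow_add₀ (by norm_num : (2:ℝ) ≠ 0)]
        congr 1
        omega
      have hB : ∀ c : ℕ, j * d ≤ c → c ≤ (j + 1) * d →
          (j:ℝ) * Ee n ≤ (c:ℝ) * Ee p ∧ (c:ℝ) * Ee p ≤ ((j:ℝ) + 1) * Ee n := by
        intro c hc1 hc2
        constructor
        · rw [hdE]
          have : ((j * d : ℕ):ℝ) ≤ (c:ℝ) := Nat.cast_le.2 hc1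
          push_cast at this
          nlinarith
        · rw [hdE]
          have : (c:ℝ) ≤ (((j + 1) * d : ℕ):ℝ) := Nat.cast_le.2 hc2
          push_cast at this
          nlinarith
      have hb1 := hB (2*q) hlow (by omega)
      have hb2 := hB (2*q+1) (by omega) (by omega)
      have hb3 := hB (2*q+2) (by omega) hhigh
      rcases (by omega : j + 1 ≤ 2*k ∨ j = 2*k ∨ j = 2*k+1 ∨ 2*k+2 ≤ j) with hc | hc | hc | hc
      · -- entirely left of the support
        have hlk : ((j:ℝ) + 1) * Ee n ≤ lpt n k := by
          rw [lpt_eq]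
          have : (j:ℝ) + 1 ≤ 2 * (k:ℝ) := by exact_mod_cast hc
          nlinarith
        exact pairing_zero g h hgpos hmono p q _
          (psi_zero_left (by rw [e1]; exact hb1.2.trans hlk))
          (psi_zero_left (by rw [e2]; exact hb2.2.trans hlk))
          (psi_zero_left (by rw [e3]; exact hb3.2.trans hlk))
      · -- inside the left affine piece [l, m]
        have hl : lpt n k = (j:ℝ) * Ee n := by rw [lpt_eq, hc]; push_cast; ring
        have hm : mpt n k = ((j:ℝ) + 1) * Ee n := by rw [mpt_eq, hc]; push_cast; ring
        apply pairing_affine g h hgpos hmono p q _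
          (Lnk g h n k) (-(Lnk g h n k) * h (lpt n k))
        · rw [psi_mid (by rw [hl, e1]; exact hb1.1) (by rw [hm, e1]; exact hb1.2)]; ring
        · rw [psi_mid (by rw [hl, e2]; exact hb2.1) (by rw [hm, e2]; exact hb2.2)]; ring
        · rw [psi_mid (by rw [hl, e3]; exact hb3.1) (by rw [hm, e3]; exact hb3.2)]; ring
      · -- inside the right affine piece [m, r]
        have hm : mpt n k = (j:ℝ) * Ee n := by rw [mpt_eq, hc]; push_cast; ring
        have hr : rpt n k = ((j:ℝ) + 1) * Ee n := by rw [rpt_eq, hc]; push_cast; ring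
        apply pairing_affine g h hgpos hmono p q _
          (-(Rnk g h n k)) (Rnk g h n k * h (rpt n k))
        · rw [psi_mid2 hgpos hmono (by rw [hm, e1]; exact hb1.1) (by rw [hr, e1]; exact hb1.2)]
          ring
        · rw [psi_mid2 hgpos hmono (by rw [hm, e2]; exact hb2.1) (by rw [hr, e2]; exact hb2.2)]
          ring
        · rw [psi_mid2 hgpos hmono (by rw [hm, e3]; exact hb3.1) (by rw [hr, e3]; exact hb3.2)]
          ring
      · -- entirely right of the support
        have hrk : rpt n k ≤ (j:ℝ) * Ee n := by
          rw [rpt_eq]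
          have : 2 * (k:ℝ) + 2 ≤ (j:ℝ) := by exact_mod_cast hc
          nlinarith
        exact pairing_zero g h hgpos hmono p q _
          (psi_zero_right (by rw [e1]; exact hrk.trans hb1.1))
          (psi_zero_right (by rw [e2]; exact hrk.trans hb2.1))
          (psi_zero_right (by rw [e3]; exact hrk.trans hb3.1))
    · -- p = n, k ≠ q : disjoint supports at the same level
      subst heq
      have hkq : k ≠ q := fun hkq' => hnp ⟨rfl, hkq'⟩
      rcases lt_or_gt_of_ne hkq with hqk | hqk
      · -- k < q : support of (n,q) is to the right
        have key : rpt n k ≤ lpt n q := by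
          rw [rpt_eq, lpt_eq]
          have : (k:ℝ) + 1 ≤ (q:ℝ) := by exact_mod_cast hqk
          nlinarith
        exact pairing_zero g h hgpos hmono n q _
          (psi_zero_right key)
          (psi_zero_right (key.trans (lpt_lt_mpt n q).le))
          (psi_zero_right (key.trans ((lpt_lt_mpt n q).trans (mpt_lt_rpt n q)).le))
      · -- q < k : support of (n,q) is to the left
        have key : rpt n q ≤ lpt n k := by
          rw [rpt_eq, lpt_eq]
          have : (q:ℝ) + 1 ≤ (k:ℝ) := by exact_mod_cast hqk
          nlinarith
        exact pairing_zero g h hgpos hmono n q _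
          (psi_zero_left (((lpt_lt_mpt n q).trans (mpt_lt_rpt n q)).le.trans key))
          (psi_zero_left ((mpt_lt_rpt n q).le.trans key))
          (psi_zero_left key)
    · -- p < n : all evaluation points lie on the coarse grid
      exact pairing_zero g h hgpos hmono p q _
        (by rw [e1]; exact coarse_vanish g h n k p (by omega) _)
        (by rw [e2]; exact coarse_vanish g h n k p (by omega) _)
        (by rw [e3]; exact coarse_vanish g h n k p (by omega) _)

end
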